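/- Let Φ : I → ℝ be a convex function on an interval I of positive real numbers, let T, V be bounded linear invertible operators on a complex Hilbert space H, and let 0 < m < M with [m², M²] contained in the interior of I and m‖Tx‖ ≤ ‖Vx‖ ≤ M‖Tx‖ for all x ∈ H. Then in the operator order, ⊙_Φ(V,T) ≥ 2·((M²−m²)⁻¹ ∫_{m²}^{M²} Φ(t) dt)·|T|² − (M²−m²)⁻¹·[Φ(M²)(M²|T|² − |V|²) + Φ(m²)(|V|² − m²|T|²)]. -/

import Mathlib

open scoped ComplexInnerProductSpace

lemma trap {Φ : ℝ → ℝ} {s : Set ℝ} (hΦ : ConvexOn ℝ s Φ) {a b : ℝ} (hab : a ≤ b)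
    (h : Set.Icc a b ⊆ s) (hc : ContinuousOn Φ (Set.Icc a b)) :
    2 * ∫ u in a..b, Φ u ≤ (b - a) * (Φ a + Φ b) := by
  rcases eq_or_lt_of_le hab with rfl | hab'
  · simp
  have hba : (0:ℝ) < b - a := by linarith
  set c : ℝ := (Φ b - Φ a) / (b - a) with hcdef
  have hpt : ∀ u ∈ Set.Icc a b, Φ u ≤ (Φ a - c * a) + c * u := by
    intro u hu
    obtain ⟨h1, h2⟩ := hu
    have key := hΦ.2 (h ⟨le_refl a, hab⟩) (h ⟨hab, le_refl b⟩)
      (show (0:ℝ) ≤ (b - u) / (b - a) from div_nonneg (by linarith) (by linarith))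
      (show (0:ℝ) ≤ (u - a) / (b - a) from div_nonneg (by linarith) (by linarith))
      (show (b - u) / (b - a) + (u - a) / (b - a) = 1 by field_simp; ring)
    have heq : ((b - u) / (b - a)) • a + ((u - a) / (b - a)) • b = u := by
      rw [smul_eq_mul, smul_eq_mul, div_mul_eq_mul_div, div_mul_eq_mul_div, ← add_div,
        div_eq_iff hba.ne']; ring
    rw [heq] at key
    calc Φ u ≤ ((b-u)/(b-a)) • Φ a + ((u-a)/(b-a)) • Φ b := key
    _ = (Φ a - c * a) + c * u := by
        simp only [smul_eq_mul, hcdef]; field_simp; ring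
  have hi1 : IntervalIntegrable Φ MeasureTheory.volume a b :=
    ContinuousOn.intervalIntegrable (by rw [Set.uIcc_of_le hab]; exact hc)
  have hi2 : IntervalIntegrable (fun u => (Φ a - c * a) + c * u) MeasureTheory.volume a b :=
    (Continuous.intervalIntegrable (by continuity) a b)
  have hmono := intervalIntegral.integral_mono_on hab hi1 hi2 hpt
  have hint : (∫ u in a..b, ((Φ a - c * a) + c * u)) = (b - a) * (Φ a - c * a) + c * ((b^2 - a^2)/2) := by
    rw [intervalIntegral.integral_add intervalIntegrable_const
      ((by fun_prop : Continuous fun u : ℝ => c * u).intervalIntegrable a b),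
      intervalIntegral.integral_const, intervalIntegral.integral_const_mul, integral_id]
    rw [smul_eq_mul]
  rw [hint] at hmono
  have hc' : c * (b - a) = Φ b - Φ a := by rw [hcdef]; field_simp
  nlinarith [hmono]

lemma key_scalar {Φ : ℝ → ℝ} {s : Set ℝ} (hΦ : ConvexOn ℝ s Φ) {a b t : ℝ}
    (h : Set.Icc a b ⊆ s) (hc : ContinuousOn Φ (Set.Icc a b)) (ht : t ∈ Set.Icc a b) :
    2 * ∫ u in a..b, Φ u ≤ (b - a) * Φ t + (t - a) * Φ a + (b - t) * Φ b := by
  obtain ⟨h1, h2⟩ := ht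
  have hs1 : Set.Icc a t ⊆ Set.Icc a b := Set.Icc_subset_Icc le_rfl h2
  have hs2 : Set.Icc t b ⊆ Set.Icc a b := Set.Icc_subset_Icc h1 le_rfl
  have e1 := trap hΦ h1 (hs1.trans h) (hc.mono hs1)
  have e2 := trap hΦ h2 (hs2.trans h) (hc.mono hs2)
  have hi1 : IntervalIntegrable Φ MeasureTheory.volume a t :=
    ContinuousOn.intervalIntegrable (by rw [Set.uIcc_of_le h1]; exact hc.mono hs1)
  have hi2 : IntervalIntegrable Φ MeasureTheory.volume t b :=
    ContinuousOn.intervalIntegrable (by rw [Set.uIcc_of_le h2]; exact hc.mono hs2)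
  have hsplit := intervalIntegral.integral_add_adjacent_intervals hi1 hi2
  rw [← hsplit]
  linarith

variable {H : Type*} [NormedAddCommGroup H] [InnerProductSpace ℂ H] [CompleteSpace H]

/-- `X = |VT⁻¹|² = (T*)⁻¹ V* V T⁻¹`. -/
noncomputable def qX (V T : (H →L[ℂ] H)ˣ) : H →L[ℂ] H :=
  star (↑(T⁻¹) : H →L[ℂ] H) * (star (V : H →L[ℂ] H) * (V : H →L[ℂ] H)) * (↑(T⁻¹) : H →L[ℂ] H)

/-- The quadratic operator perspective `⊙_Φ(V,T) = T* Φ(X) T`. -/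
noncomputable def qPersp (Φ : ℝ → ℝ) (V T : (H →L[ℂ] H)ˣ) : H →L[ℂ] H :=
  star (T : H →L[ℂ] H) * cfc Φ (qX V T) * (T : H →L[ℂ] H)

/-- `|T|² = T*T`. -/
noncomputable def modSq (T : (H →L[ℂ] H)ˣ) : H →L[ℂ] H :=
  star (T : H →L[ℂ] H) * (T : H →L[ℂ] H)

theorem stmt6 (I : Set ℝ) (hIpos : I ⊆ Set.Ioi 0)
    (Φ : ℝ → ℝ) (hΦ : ConvexOn ℝ I Φ)
    (T V : (H →L[ℂ] H)ˣ) (m M : ℝ) (hm : 0 < m) (hmM : m < M)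
    (hsub : Set.Icc (m ^ 2) (M ^ 2) ⊆ interior I)
    (hTV : ∀ x : H, m * ‖(T : H →L[ℂ] H) x‖ ≤ ‖(V : H →L[ℂ] H) x‖ ∧ ‖(V : H →L[ℂ] H) x‖ ≤ M * ‖(T : H →L[ℂ] H) x‖) :
    (2 * ((M ^ 2 - m ^ 2)⁻¹ * ∫ t in (m ^ 2 : ℝ)..(M ^ 2), Φ t)) • modSq T -
      (M ^ 2 - m ^ 2)⁻¹ •
        (Φ (M ^ 2) • ((M ^ 2 : ℝ) • modSq T - modSq V) +
          Φ (m ^ 2) • (modSq V - (m ^ 2 : ℝ) • modSq T)) ≤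
      qPersp Φ V T := by
  have hmm : m ^ 2 < M ^ 2 := by nlinarith
  have hD : (0:ℝ) < M ^ 2 - m ^ 2 := by linarith
  set Tc : H →L[ℂ] H := (T : H →L[ℂ] H) with hTcd
  set Vc : H →L[ℂ] H := (V : H →L[ℂ] H) with hVcd
  set Ti : H →L[ℂ] H := ((T⁻¹ : (H →L[ℂ] H)ˣ) : H →L[ℂ] H) with hTid
  set w : H →L[ℂ] H := Vc * Ti with hw
  have hqx : qX V T = star w * w := by
    simp only [qX, hw, star_mul, mul_assoc, hTcd, hVcd, hTid]
  have ha : IsSelfAdjoint (qX V T) := by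
    rw [hqx]; exact IsSelfAdjoint.star_mul_self w
  have hTT : Ti * Tc = 1 := T.inv_mul
  have hTT' : Tc * Ti = 1 := T.mul_inv
  have happ : ∀ x : H, Tc (Ti x) = x := by
    intro x
    rw [← ContinuousLinearMap.mul_apply, hTT', ContinuousLinearMap.one_apply]
  have hwapp : ∀ x : H, w x = Vc (Ti x) := fun x => rfl
  -- norm bounds for w
  have hnorm1 : ∀ x : H, m * ‖x‖ ≤ ‖w x‖ := by
    intro x
    have := (hTV (Ti x)).1
    rwa [happ x, ← hwapp x] at this
  have hnorm2 : ∀ x : H, ‖w x‖ ≤ M * ‖x‖ := by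
    intro x
    have := (hTV (Ti x)).2
    rwa [happ x, ← hwapp x] at this
  -- inner product computations
  have hip : ∀ x : H, RCLike.re (⟪(qX V T) x, x⟫) = ‖w x‖ ^ 2 := by
    intro x
    rw [hqx, ContinuousLinearMap.mul_apply, ContinuousLinearMap.star_eq_adjoint,
      ContinuousLinearMap.adjoint_inner_left]
    exact inner_self_eq_norm_sq (w x)
  have halg : ∀ (r : ℝ) (x : H),
      RCLike.re (⟪(algebraMap ℝ (H →L[ℂ] H) r) x, x⟫) = r * ‖x‖ ^ 2 := by
    intro r x
    rw [Algebra.algebraMap_eq_smul_one, ContinuousLinearMap.smul_apply,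
      ContinuousLinearMap.one_apply, RCLike.real_smul_eq_coe_smul (K := ℂ),
      inner_smul_real_left, RCLike.smul_re, inner_self_eq_norm_sq]
  -- self-adjointness of real algebraMap
  have hsa_alg : ∀ r : ℝ, IsSelfAdjoint (algebraMap ℝ (H →L[ℂ] H) r) := by
    intro r
    rw [Algebra.algebraMap_eq_smul_one]
    exact IsSelfAdjoint.smul (star_trivial r) (IsSelfAdjoint.one _)
  -- lower and upper bounds
  have hlb : algebraMap ℝ (H →L[ℂ] H) (m ^ 2) ≤ qX V T := by
    rw [ContinuousLinearMap.le_def]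
    refine ⟨(ha.sub (hsa_alg (m ^ 2))).isSymmetric, fun x => ?_⟩
    rw [ContinuousLinearMap.reApplyInnerSelf_apply, ContinuousLinearMap.sub_apply,
      inner_sub_left, map_sub, hip, halg]
    have h1 := hnorm1 x
    nlinarith [norm_nonneg x, norm_nonneg (w x), hm.le,
      mul_self_le_mul_self (by positivity : (0:ℝ) ≤ m * ‖x‖) h1]
  have hub : qX V T ≤ algebraMap ℝ (H →L[ℂ] H) (M ^ 2) := by
    rw [ContinuousLinearMap.le_def]
    refine ⟨((hsa_alg (M ^ 2)).sub ha).isSymmetric, fun x => ?_⟩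
    rw [ContinuousLinearMap.reApplyInnerSelf_apply, ContinuousLinearMap.sub_apply,
      inner_sub_left, map_sub, hip, halg]
    have h2 := hnorm2 x
    nlinarith [norm_nonneg x, norm_nonneg (w x), (hm.trans hmM).le,
      mul_self_le_mul_self (norm_nonneg (w x)) h2]
  have hspec : spectrum ℝ (qX V T) ⊆ Set.Icc (m ^ 2) (M ^ 2) := fun x hx =>
    ⟨(algebraMap_le_iff_le_spectrum ha).mp hlb x hx,
     (le_algebraMap_iff_spectrum_le ha).mp hub x hx⟩
  -- continuity of Φ on [m², M²]
  have hcontΦ : ContinuousOn Φ (Set.Icc (m ^ 2) (M ^ 2)) :=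
    (hΦ.continuousOn_interior).mono hsub
  -- scalar inequality on the spectrum
  set K : ℝ := (M ^ 2 - m ^ 2)⁻¹ with hKd
  set J : ℝ := ∫ t in (m ^ 2 : ℝ)..(M ^ 2), Φ t with hJd
  set c₀ : ℝ := 2 * (K * J) - K * (Φ (M ^ 2) * M ^ 2 - Φ (m ^ 2) * m ^ 2) with hc₀
  set c₁ : ℝ := K * (Φ (M ^ 2) - Φ (m ^ 2)) with hc₁
  have hKD : K * (M ^ 2 - m ^ 2) = 1 := by rw [hKd]; field_simp
  have hKpos : (0:ℝ) < K := by rw [hKd]; positivity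
  have hg : ∀ x ∈ spectrum ℝ (qX V T), c₀ + c₁ * x ≤ Φ x := by
    intro x hx
    have hx' := hspec hx
    have key := key_scalar hΦ (hsub.trans interior_subset) hcontΦ hx'
    have key2 := mul_le_mul_of_nonneg_left key hKpos.le
    have e : K * ((M^2 - m^2) * Φ x + (x - m^2) * Φ (m^2) + (M^2 - x) * Φ (M^2))
        = Φ x + K * ((x - m^2) * Φ (m^2)) + K * ((M^2 - x) * Φ (M^2)) := by
      linear_combination Φ x * hKD
    rw [e] at key2
    rw [hc₀, hc₁]
    linarith [key2]
  have hmono : cfc (fun t : ℝ => c₀ + c₁ * t) (qX V T) ≤ cfc Φ (qX V T) :=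
    cfc_mono hg (by fun_prop) (hcontΦ.mono hspec)
  have hlin : cfc (fun t : ℝ => c₀ + c₁ * t) (qX V T)
      = algebraMap ℝ (H →L[ℂ] H) c₀ + c₁ • (qX V T) := by
    rw [cfc_add (a := qX V T) (fun _ => c₀) (fun t => c₁ * t) (by fun_prop) (by fun_prop),
      cfc_const c₀ (qX V T) ha, cfc_const_mul_id c₁ (qX V T) ha]
  -- conjugation
  have hconjA : star Tc * qX V T * Tc = modSq V := by
    have h2 : star Tc * star Ti = 1 := by rw [← star_mul, hTT, star_one]
    calc star Tc * qX V T * Tc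
        = (star Tc * star Ti) * ((star Vc * Vc) * (Ti * Tc)) := by
          simp only [qX, ← hTcd, ← hVcd, ← hTid, mul_assoc]
      _ = modSq V := by rw [h2, hTT, one_mul, mul_one, modSq, hVcd]
  have hL : star Tc * (algebraMap ℝ (H →L[ℂ] H) c₀ + c₁ • qX V T) * Tc
      = c₀ • modSq T + c₁ • modSq V := by
    rw [mul_add, add_mul, Algebra.algebraMap_eq_smul_one]
    rw [mul_smul_comm, smul_mul_assoc, mul_one, mul_smul_comm, smul_mul_assoc, hconjA]
    rfl
  have hfinal := star_left_conjugate_le_conjugate hmono Tc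
  rw [hlin, hL] at hfinal
  have hgoal : (2 * (K * J)) • modSq T -
      K • (Φ (M ^ 2) • ((M ^ 2 : ℝ) • modSq T - modSq V) +
        Φ (m ^ 2) • (modSq V - (m ^ 2 : ℝ) • modSq T))
      = c₀ • modSq T + c₁ • (modSq V : H →L[ℂ] H) := by
    rw [hc₀, hc₁]
    module
  rw [hgoal]
  exact hfinal
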